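/- Let X_1, X_2, ... be i.i.d. with E X_1 = 0 and E e^{t|X_1|} < ∞ for some t > 0, and S_n = X_1 + ... + X_n. Then there exist constants g, T > 0, independent of n, such that P(S_n ≥ x) ≤ exp(−x²/(2gn)) for 0 ≤ x ≤ ngT, and P(S_n ≥ x) ≤ exp(−Tx/2) for x ≥ ngT. -/

import Mathlib

open MeasureTheory ProbabilityTheory

private lemma exp_le_quadratic (y : ℝ) : Real.exp y ≤ 1 + y + y ^ 2 * Real.exp |y| := by
  rcases le_or_gt 0 y with hy | hy
  · rw [abs_of_nonneg hy]
    have h1 : 1 - y ≤ Real.exp (-y) := by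
      have := Real.add_one_le_exp (-y); linarith
    have h2 : (1 - y) * Real.exp y ≤ 1 := by
      calc (1 - y) * Real.exp y ≤ Real.exp (-y) * Real.exp y :=
            mul_le_mul_of_nonneg_right h1 (Real.exp_pos y).le
        _ = 1 := by rw [← Real.exp_add]; simp
    nlinarith [Real.exp_pos y, mul_le_mul_of_nonneg_left h2 hy]
  · rw [abs_of_neg hy]
    have h1 : 1 + (-y) ≤ Real.exp (-y) := by have := Real.add_one_le_exp (-y); linarith
    have h2 : (1 + (-y)) * Real.exp y ≤ 1 := by
      have := mul_le_mul_of_nonneg_right h1 (Real.exp_pos y).le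
      calc (1 + (-y)) * Real.exp y ≤ Real.exp (-y) * Real.exp y := this
        _ = 1 := by rw [← Real.exp_add]; simp
    have h3 : Real.exp y ≤ 1 + y + y ^ 2 := by
      nlinarith [Real.exp_pos y, pow_pos (show (0:ℝ) < -y by linarith) 3]
    have h4 : (1:ℝ) ≤ Real.exp (-y) := Real.one_le_exp (by linarith)
    nlinarith [sq_nonneg y]

private lemma sq_le_exp_aux {T x : ℝ} (hT : 0 < T) :
    x ^ 2 * Real.exp (T * |x|) ≤ 4 / T ^ 2 * Real.exp (2 * T * |x|) := by
  have hx : 0 ≤ |x| := abs_nonneg x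
  have h1 : 1 + T * |x| / 2 ≤ Real.exp (T * |x| / 2) := by
    have := Real.add_one_le_exp (T * |x| / 2); linarith
  have h2 : (T * |x| / 2) ^ 2 ≤ Real.exp (T * |x| / 2) ^ 2 := by
    have h0 : (0:ℝ) ≤ 1 + T * |x| / 2 := by positivity
    nlinarith [mul_nonneg (mul_nonneg hT.le hx) (mul_nonneg hT.le hx)]
  have h3 : Real.exp (T * |x| / 2) ^ 2 = Real.exp (T * |x|) := by
    rw [← Real.exp_nat_mul]; ring_nf
  have h4 : T ^ 2 * x ^ 2 / 4 ≤ Real.exp (T * |x|) := by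
    rw [← h3]
    calc T ^ 2 * x ^ 2 / 4 = (T * |x| / 2) ^ 2 := by
          rw [div_pow, mul_pow, sq_abs]; ring
      _ ≤ _ := h2
  have h5 : x ^ 2 ≤ 4 / T ^ 2 * Real.exp (T * |x|) := by
    rw [div_mul_eq_mul_div, le_div_iff₀ (by positivity)]
    nlinarith
  calc x ^ 2 * Real.exp (T * |x|) ≤ (4 / T ^ 2 * Real.exp (T * |x|)) * Real.exp (T * |x|) :=
        mul_le_mul_of_nonneg_right h5 (Real.exp_pos _).le
    _ = 4 / T ^ 2 * Real.exp (2 * T * |x|) := by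
        rw [mul_assoc, ← Real.exp_add]; ring_nf

/-- Petrov/Bernstein-type moderate deviation inequality: if `X₁, X₂, …` are
i.i.d. centered random variables with a finite exponential moment, then there
are constants `g, T > 0` (independent of `n`) with
`P(S_n ≥ x) ≤ exp(-x²/(2gn))` for `0 ≤ x ≤ ngT` and
`P(S_n ≥ x) ≤ exp(-Tx/2)` for `x ≥ ngT`. -/
theorem petrov_moderate_deviations {Ω : Type*} [MeasurableSpace Ω]
    (μ : Measure Ω) [IsProbabilityMeasure μ]
    (X : ℕ → Ω → ℝ) (hmeas : ∀ i, Measurable (X i))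
    (hindep : iIndepFun X μ)
    (hident : ∀ i, IdentDistrib (X i) (X 1) μ μ)
    (hmean : ∫ ω, X 1 ω ∂μ = 0)
    (hexp : ∃ t : ℝ, 0 < t ∧ Integrable (fun ω => Real.exp (t * |X 1 ω|)) μ) :
    ∃ g : ℝ, 0 < g ∧ ∃ T : ℝ, 0 < T ∧ ∀ n : ℕ, ∀ x : ℝ,
      (0 ≤ x → x ≤ n * g * T →
        μ {ω | x ≤ ∑ i ∈ Finset.Icc 1 n, X i ω}
          ≤ ENNReal.ofReal (Real.exp (-(x ^ 2) / (2 * g * n)))) ∧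
      (n * g * T ≤ x →
        μ {ω | x ≤ ∑ i ∈ Finset.Icc 1 n, X i ω}
          ≤ ENNReal.ofReal (Real.exp (-(T * x) / 2))) := by
  obtain ⟨t₀, ht₀, hint⟩ := hexp
  set T : ℝ := t₀ / 2 with hT_def
  have hT : 0 < T := by positivity
  -- integrability of the quadratic exponential moment
  have hquad : Integrable (fun ω => (X 1 ω) ^ 2 * Real.exp (T * |X 1 ω|)) μ := by
    refine (hint.const_mul (4 / T ^ 2)).mono ?_ ?_
    · exact (((hmeas 1).pow_const 2).mul
        (((hmeas 1).abs.const_mul T).exp)).aestronglyMeasurable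
    · filter_upwards with ω
      have h := sq_le_exp_aux (x := X 1 ω) hT
      have h2T : 2 * T = t₀ := by rw [hT_def]; ring
      rw [h2T] at h
      have hpos : (0:ℝ) ≤ (X 1 ω) ^ 2 * Real.exp (T * |X 1 ω|) := by positivity
      have hpos2 : (0:ℝ) ≤ 4 / T ^ 2 * Real.exp (t₀ * |X 1 ω|) := by positivity
      rw [Real.norm_eq_abs, Real.norm_eq_abs, abs_of_nonneg hpos, abs_of_nonneg hpos2]
      exact h
  -- integrability of X 1
  have hX1int : Integrable (X 1) μ := by
    refine (hint.const_mul (1 / t₀)).mono (hmeas 1).aestronglyMeasurable ?_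
    filter_upwards with ω
    have h1 : t₀ * |X 1 ω| ≤ Real.exp (t₀ * |X 1 ω|) := by
      have := Real.add_one_le_exp (t₀ * |X 1 ω|); linarith [Real.exp_pos (t₀ * |X 1 ω|)]
    have hpos2 : (0:ℝ) ≤ 1 / t₀ * Real.exp (t₀ * |X 1 ω|) := by positivity
    rw [Real.norm_eq_abs, Real.norm_eq_abs, abs_of_nonneg hpos2]
    rw [show (1 / t₀) * Real.exp (t₀ * |X 1 ω|) = Real.exp (t₀ * |X 1 ω|) / t₀ by ring,
      le_div_iff₀ ht₀]
    calc |X 1 ω| * t₀ = t₀ * |X 1 ω| := by ring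
      _ ≤ _ := h1
  set g₀ : ℝ := ∫ ω, (X 1 ω) ^ 2 * Real.exp (T * |X 1 ω|) ∂μ with hg₀_def
  have hg₀ : 0 ≤ g₀ := integral_nonneg fun ω => by positivity
  set g : ℝ := 2 * (g₀ + 1) with hg_def
  have hg : 0 < g := by positivity
  -- integrability of exp (t * X 1) for 0 ≤ t ≤ t₀
  have hexpint : ∀ t : ℝ, 0 ≤ t → t ≤ t₀ → Integrable (fun ω => Real.exp (t * X 1 ω)) μ := by
    intro t ht ht'
    refine hint.mono (((hmeas 1).const_mul t).exp).aestronglyMeasurable ?_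
    filter_upwards with ω
    rw [Real.norm_eq_abs, Real.norm_eq_abs, abs_of_nonneg (Real.exp_pos _).le,
      abs_of_nonneg (Real.exp_pos _).le]
    apply Real.exp_le_exp.2
    calc t * X 1 ω ≤ t * |X 1 ω| := mul_le_mul_of_nonneg_left (le_abs_self _) ht
      _ ≤ t₀ * |X 1 ω| := mul_le_mul_of_nonneg_right ht' (abs_nonneg _)
  -- the mgf bound
  have hmgf : ∀ t : ℝ, 0 ≤ t → t ≤ T → mgf (X 1) μ t ≤ Real.exp (g * t ^ 2 / 2) := by
    intro t ht ht'
    have htt₀ : t ≤ t₀ := le_trans ht' (by rw [hT_def]; linarith)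
    have hptwise : ∀ ω, Real.exp (t * X 1 ω) ≤
        1 + t * X 1 ω + t ^ 2 * ((X 1 ω) ^ 2 * Real.exp (T * |X 1 ω|)) := by
      intro ω
      have h := exp_le_quadratic (t * X 1 ω)
      have habs : |t * X 1 ω| = t * |X 1 ω| := by rw [abs_mul, abs_of_nonneg ht]
      have h2 : Real.exp |t * X 1 ω| ≤ Real.exp (T * |X 1 ω|) := by
        rw [habs]; exact Real.exp_le_exp.2 (mul_le_mul_of_nonneg_right ht' (abs_nonneg _))
      calc Real.exp (t * X 1 ω) ≤ 1 + t * X 1 ω + (t * X 1 ω) ^ 2 * Real.exp |t * X 1 ω| := h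
        _ ≤ 1 + t * X 1 ω + (t * X 1 ω) ^ 2 * Real.exp (T * |X 1 ω|) := by
            gcongr
        _ = 1 + t * X 1 ω + t ^ 2 * ((X 1 ω) ^ 2 * Real.exp (T * |X 1 ω|)) := by ring
    have hRHSint : Integrable
        (fun ω => 1 + t * X 1 ω + t ^ 2 * ((X 1 ω) ^ 2 * Real.exp (T * |X 1 ω|))) μ :=
      ((integrable_const 1).add (hX1int.const_mul t)).add (hquad.const_mul (t ^ 2))
    have hineq : mgf (X 1) μ t ≤ 1 + t ^ 2 * g₀ := by
      have hmono := integral_mono (hexpint t ht htt₀) hRHSint (fun ω => hptwise ω)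
      have hi1 : Integrable (fun ω => 1 + t * X 1 ω) μ :=
        (integrable_const 1).add (hX1int.const_mul t)
      have hi2 : Integrable (fun ω => t ^ 2 * ((X 1 ω) ^ 2 * Real.exp (T * |X 1 ω|))) μ :=
        hquad.const_mul _
      have e1 : ∫ ω, (1 + t * X 1 ω + t ^ 2 * ((X 1 ω) ^ 2 * Real.exp (T * |X 1 ω|))) ∂μ
          = (∫ ω, (1 + t * X 1 ω) ∂μ)
            + ∫ ω, t ^ 2 * ((X 1 ω) ^ 2 * Real.exp (T * |X 1 ω|)) ∂μ :=
        integral_add hi1 hi2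
      have e2 : ∫ ω, (1 + t * X 1 ω) ∂μ = 1 := by
        have e3 : ∫ ω, (1 + t * X 1 ω) ∂μ
            = (∫ _ω : Ω, (1:ℝ) ∂μ) + ∫ ω, t * X 1 ω ∂μ :=
          integral_add (integrable_const 1) (hX1int.const_mul t)
        rw [e3, integral_const, integral_const_mul, hmean]; simp
      have e4 : ∫ ω, t ^ 2 * ((X 1 ω) ^ 2 * Real.exp (T * |X 1 ω|)) ∂μ = t ^ 2 * g₀ := by
        rw [integral_const_mul]
      rw [e1, e2, e4] at hmono
      simpa [mgf] using hmono
    calc mgf (X 1) μ t ≤ 1 + t ^ 2 * g₀ := hineq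
      _ ≤ 1 + g * t ^ 2 / 2 := by
          have : t ^ 2 * g₀ ≤ t ^ 2 * (g₀ + 1) := by nlinarith [sq_nonneg t]
          rw [hg_def]; nlinarith [sq_nonneg t]
      _ ≤ Real.exp (g * t ^ 2 / 2) := by
          have := Real.add_one_le_exp (g * t ^ 2 / 2); linarith
  -- Chernoff bound applied to the partial sums
  have key : ∀ (n : ℕ) (t x : ℝ), 0 ≤ t → t ≤ T →
      μ {ω | x ≤ ∑ i ∈ Finset.Icc 1 n, X i ω}
        ≤ ENNReal.ofReal (Real.exp (-t * x + n * (g * t ^ 2 / 2))) := by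
    intro n t x ht ht'
    have htt₀ : t ≤ t₀ := le_trans ht' (by rw [hT_def]; linarith)
    have hinti : ∀ i ∈ Finset.Icc 1 n, Integrable (fun ω => Real.exp (t * X i ω)) μ := by
      intro i _
      have hid : IdentDistrib (fun ω => Real.exp (t * X i ω))
          (fun ω => Real.exp (t * X 1 ω)) μ μ :=
        (hident i).comp (u := fun x => Real.exp (t * x)) ((measurable_id.const_mul t).exp)
      exact hid.integrable_iff.2 (hexpint t ht htt₀)
    have hsumint := hindep.integrable_exp_mul_sum hmeas hinti
    have hchern := measure_ge_le_exp_mul_mgf (X := ∑ i ∈ Finset.Icc 1 n, X i)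
      (μ := μ) (t := t) x ht hsumint
    have hset : {ω | x ≤ (∑ i ∈ Finset.Icc 1 n, X i) ω}
        = {ω | x ≤ ∑ i ∈ Finset.Icc 1 n, X i ω} := by
      ext ω; simp [Finset.sum_apply]
    rw [hset] at hchern
    have hmgfeq : mgf (∑ i ∈ Finset.Icc 1 n, X i) μ t = (mgf (X 1) μ t) ^ n := by
      rw [hindep.mgf_sum hmeas]
      have : ∀ i ∈ Finset.Icc 1 n, mgf (X i) μ t = mgf (X 1) μ t := by
        intro i _
        unfold mgf
        exact ((hident i).comp (u := fun x => Real.exp (t * x))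
          ((measurable_id.const_mul t).exp)).integral_eq
      rw [Finset.prod_congr rfl this, Finset.prod_const, Nat.card_Icc]
      simp
    have hbound : (μ {ω | x ≤ ∑ i ∈ Finset.Icc 1 n, X i ω}).toReal
        ≤ Real.exp (-t * x + n * (g * t ^ 2 / 2)) := by
      calc (μ {ω | x ≤ ∑ i ∈ Finset.Icc 1 n, X i ω}).toReal
          ≤ Real.exp (-t * x) * mgf (∑ i ∈ Finset.Icc 1 n, X i) μ t := hchern
        _ = Real.exp (-t * x) * (mgf (X 1) μ t) ^ n := by rw [hmgfeq]
        _ ≤ Real.exp (-t * x) * (Real.exp (g * t ^ 2 / 2)) ^ n := by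
            gcongr
            exacts [mgf_nonneg, hmgf t ht ht']
        _ = Real.exp (-t * x + n * (g * t ^ 2 / 2)) := by
            rw [← Real.exp_nat_mul, ← Real.exp_add]
    calc μ {ω | x ≤ ∑ i ∈ Finset.Icc 1 n, X i ω}
        = ENNReal.ofReal ((μ {ω | x ≤ ∑ i ∈ Finset.Icc 1 n, X i ω}).toReal) :=
          (ENNReal.ofReal_toReal (measure_ne_top _ _)).symm
      _ ≤ ENNReal.ofReal (Real.exp (-t * x + n * (g * t ^ 2 / 2))) :=
          ENNReal.ofReal_le_ofReal hbound
  refine ⟨g, hg, T, hT, fun n x => ⟨?_, ?_⟩⟩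
  · intro hx0 hx1
    rcases Nat.eq_zero_or_pos n with hn | hn
    · subst hn
      have hx : x = 0 := le_antisymm (by simpa using hx1) hx0
      subst hx
      simp only [Nat.cast_zero, mul_zero, ne_eq, OfNat.ofNat_ne_zero,
        not_false_eq_true, zero_pow, neg_zero, zero_div, Real.exp_zero,
        ENNReal.ofReal_one]
      exact prob_le_one
    · have hn' : (0:ℝ) < n := by exact_mod_cast hn
      have hng : (0:ℝ) < n * g := by positivity
      set t : ℝ := x / (n * g) with ht_def
      have ht : 0 ≤ t := div_nonneg hx0 hng.le
      have ht' : t ≤ T := by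
        rw [ht_def, div_le_iff₀ hng]
        calc x ≤ n * g * T := hx1
          _ = T * (n * g) := by ring
      have := key n t x ht ht'
      have heq : -t * x + n * (g * t ^ 2 / 2) = -(x ^ 2) / (2 * g * n) := by
        rw [ht_def]
        field_simp
        ring
      rwa [heq] at this
  · intro hx1
    have hx0 : 0 ≤ x := le_trans (by positivity) hx1
    have := key n T x hT.le le_rfl
    refine le_trans this (ENNReal.ofReal_le_ofReal (Real.exp_le_exp.2 ?_))
    have h2 : n * (g * T ^ 2 / 2) ≤ x * T / 2 := by
      have : (n * g * T) * T ≤ x * T := mul_le_mul_of_nonneg_right hx1 hT.le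
      nlinarith
    linarith
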